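/- If ψ is a unit vector achieving the quantum bound ⟨ψ|B̄|ψ⟩ = −Nk, then for each party i: (Z̄^{(i)})² ψ = ψ, (X̄^{(i)})² ψ = ψ, and (Z̄^{(i)} X̄^{(i)} + X̄^{(i)} Z̄^{(i)}) ψ = 0, where Z̄^{(i)} = (2/k)∑_a cos(aπ/k) σ̄_a^{(i)} and X̄^{(i)} = (2/k)∑_a sin(aπ/k) σ̄_a^{(i)}. -/

import Mathlib

open Real Finset

lemma sum_exp_zero (k : ℕ) (hk : 2 ≤ k) :
    ∑ a : Fin k, Complex.exp ((2 * π * a / k : ℝ) * Complex.I) = 0 := by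
  have hkR : (0:ℝ) < k := by positivity
  have hkC : (k:ℂ) ≠ 0 := by exact_mod_cast hkR.ne'
  set ζ : ℂ := Complex.exp ((2 * π / k : ℝ) * Complex.I) with hζ
  have h : ∀ a : ℕ, Complex.exp ((2 * π * a / k : ℝ) * Complex.I) = ζ ^ a := by
    intro a
    rw [hζ, ← Complex.exp_nat_mul]
    congr 1
    push_cast
    ring
  have hζ1 : ζ ≠ 1 := by
    rw [hζ, Ne, Complex.exp_eq_one_iff]
    push_neg
    intro n hn
    rw [mul_comm ((n:ℂ)) _] at hn
    have h2 : ((2 * π / k : ℝ) : ℂ) = 2 * π * (n:ℂ) :=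
      mul_right_cancel₀ Complex.I_ne_zero (by rw [hn]; ring)
    have hπ : (0:ℝ) < π := Real.pi_pos
    have h3 : (2 * π / k : ℝ) = 2 * π * (n:ℝ) := by exact_mod_cast h2
    have h3' : 2 * π = 2 * π * ((n:ℝ) * k) := by
      field_simp at h3
      rw [mul_comm (n:ℝ) (k:ℝ), ← h3, mul_one]
    have h5 : ((n:ℝ) * k) = 1 := by
      have h2π : (2*π:ℝ) ≠ 0 := by positivity
      exact mul_left_cancel₀ h2π (by rw [mul_one]; linarith [h3'])
    have h6 : (n * (k:ℤ) : ℤ) = 1 := by exact_mod_cast h5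
    have h8 : (k:ℤ) = 1 := Int.eq_one_of_mul_eq_one_right (by positivity)
      (by rw [mul_comm] at h6; exact h6)
    have h9 : k = 1 := by exact_mod_cast h8
    omega
  have hζk : ζ ^ k = 1 := by
    rw [hζ, ← Complex.exp_nat_mul]
    have : (k:ℂ) * (((2 * π / k : ℝ)) * Complex.I) = (1:ℤ) * (2*π* Complex.I) := by
      push_cast
      field_simp
    rw [this]
    exact Complex.exp_int_mul_two_pi_mul_I 1
  rw [Fin.sum_univ_eq_sum_range (fun a => Complex.exp ((2 * π * a / k : ℝ) * Complex.I))]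
  rw [Finset.sum_congr rfl (fun a _ => h a), geom_sum_eq hζ1, hζk]
  simp

lemma sum_cos_two (k : ℕ) (hk : 2 ≤ k) :
    ∑ a : Fin k, Real.cos (2 * π * a / k) = 0 := by
  have h := congrArg Complex.re (sum_exp_zero k hk)
  rw [Complex.re_sum] at h
  simp only [Complex.exp_ofReal_mul_I_re, Complex.zero_re] at h
  exact h

lemma sum_sin_two (k : ℕ) (hk : 2 ≤ k) :
    ∑ a : Fin k, Real.sin (2 * π * a / k) = 0 := by
  have h := congrArg Complex.im (sum_exp_zero k hk)
  rw [Complex.im_sum] at h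
  simp only [Complex.exp_ofReal_mul_I_im, Complex.zero_im] at h
  exact h

lemma sum_cos_sq' (k : ℕ) (hk : 2 ≤ k) :
    ∑ a : Fin k, Real.cos ((a:ℝ) * π / k) ^ 2 = k / 2 := by
  have h : ∀ a : Fin k, Real.cos ((a:ℝ) * π / k) ^ 2
      = 1/2 + Real.cos (2 * π * a / k) / 2 := by
    intro a
    rw [Real.cos_sq]
    congr 2
    ring
  rw [Finset.sum_congr rfl (fun a _ => h a), Finset.sum_add_distrib,
    ← Finset.sum_div, ← Finset.sum_div, sum_cos_two k hk]
  simp [Finset.card_univ]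

lemma sum_sin_sq' (k : ℕ) (hk : 2 ≤ k) :
    ∑ a : Fin k, Real.sin ((a:ℝ) * π / k) ^ 2 = k / 2 := by
  have h : ∀ a : Fin k, Real.sin ((a:ℝ) * π / k) ^ 2
      = 1 - Real.cos ((a:ℝ) * π / k) ^ 2 := by
    intro a
    have := Real.sin_sq_add_cos_sq ((a:ℝ) * π / k)
    linarith
  rw [Finset.sum_congr rfl (fun a _ => h a), Finset.sum_sub_distrib, sum_cos_sq' k hk]
  simp [Finset.card_univ]
  ring

lemma sum_sin_mul_cos' (k : ℕ) (hk : 2 ≤ k) :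
    ∑ a : Fin k, Real.sin ((a:ℝ) * π / k) * Real.cos ((a:ℝ) * π / k) = 0 := by
  have h : ∀ a : Fin k, Real.sin ((a:ℝ) * π / k) * Real.cos ((a:ℝ) * π / k)
      = Real.sin (2 * π * a / k) / 2 := by
    intro a
    have h2 : (2 * π * a / k : ℝ) = 2 * ((a:ℝ) * π / k) := by ring
    rw [h2, Real.sin_two_mul]
    ring
  rw [Finset.sum_congr rfl (fun a _ => h a), ← Finset.sum_div, sum_sin_two k hk]
  simp

set_option maxHeartbeats 1600000

/-- If a unit vector `ψ` attains the quantum bound `⟨ψ, B̄ ψ⟩ = -Nk` of the generalized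
chained Bell operator, then for each party `i` the operators
`Z̄⁽ⁱ⁾ = (2/k) ∑_a cos(aπ/k) σ̄_a⁽ⁱ⁾` and `X̄⁽ⁱ⁾ = (2/k) ∑_a sin(aπ/k) σ̄_a⁽ⁱ⁾` act on `ψ`
like Pauli matrices: `(Z̄⁽ⁱ⁾)² ψ = ψ`, `(X̄⁽ⁱ⁾)² ψ = ψ`, and
`(Z̄⁽ⁱ⁾X̄⁽ⁱ⁾ + X̄⁽ⁱ⁾Z̄⁽ⁱ⁾) ψ = 0`. -/
theorem max_violation_pauli_relations (N k : ℕ) (hN : 2 ≤ N) (hk : 3 ≤ k)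
    (H : Type*) [NormedAddCommGroup H] [InnerProductSpace ℂ H] [CompleteSpace H]
    (σ : Fin N → Fin k → (H →L[ℂ] H))
    (hsa : ∀ i a, IsSelfAdjoint (σ i a))
    (hsq : ∀ i a, σ i a * σ i a = 1)
    (hcomm : ∀ i j a b, i ≠ j → Commute (σ i a) (σ j b))
    (Bop : H →L[ℂ] H)
    (hBop : Bop = ∑ a : Fin k, ∑ b : Fin k,
        (((2 / (k : ℝ)) * Real.cos (π * ((a : ℝ) - (b : ℝ)) / k) : ℝ) : ℂ) •
          ∑ i : Fin N, ∑ j : Fin N, if i ≠ j then σ i a * σ j b else 0)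
    (Z X : Fin N → (H →L[ℂ] H))
    (hZ : ∀ i, Z i = (((2 / (k : ℝ)) : ℝ) : ℂ) •
        ∑ a : Fin k, ((Real.cos ((a : ℝ) * π / k) : ℝ) : ℂ) • σ i a)
    (hX : ∀ i, X i = (((2 / (k : ℝ)) : ℝ) : ℂ) •
        ∑ a : Fin k, ((Real.sin ((a : ℝ) * π / k) : ℝ) : ℂ) • σ i a)
    (ψ : H) (hψ : ‖ψ‖ = 1)
    (hmax : (inner ℂ ψ (Bop ψ) : ℂ) = -(((N : ℝ) * k : ℝ) : ℂ)) :
    ∀ i : Fin N,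
      (Z i * Z i) ψ = ψ ∧ (X i * X i) ψ = ψ ∧ (Z i * X i + X i * Z i) ψ = 0 := by
  have hkR : (0:ℝ) < k := by positivity
  have hkne : (k:ℝ) ≠ 0 := hkR.ne'
  have hkC : (k:ℂ) ≠ 0 := by exact_mod_cast hkne
  set μ : ℂ := ((2 / (k : ℝ) : ℝ) : ℂ) with hμ
  set c : Fin k → ℝ := fun a => Real.cos ((a:ℝ) * π / k) with hc
  set s : Fin k → ℝ := fun a => Real.sin ((a:ℝ) * π / k) with hs
  set V : Fin N → H := fun i => ∑ a, ((c a : ℝ) : ℂ) • σ i a ψ with hV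
  set W : Fin N → H := fun i => ∑ a, ((s a : ℝ) : ℂ) • σ i a ψ with hW
  -- symmetry of the observables
  have hsym : ∀ i a (x y : H), (inner ℂ (σ i a x) y : ℂ) = inner ℂ x (σ i a y) :=
    fun i a => (ContinuousLinearMap.isSelfAdjoint_iff_isSymmetric.mp (hsa i a))
  -- applying an observable twice is the identity, pointwise
  have hsq' : ∀ i a (x : H), σ i a (σ i a x) = x := by
    intro i a x
    have := congrArg (fun T : H →L[ℂ] H => T x) (hsq i a)
    simpa using this
  have hZψ : ∀ i, Z i ψ = μ • V i := by
    intro i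
    rw [hZ]
    simp only [ContinuousLinearMap.smul_apply, ContinuousLinearMap.sum_apply]
    rfl
  have hXψ : ∀ i, X i ψ = μ • W i := by
    intro i
    rw [hX]
    simp only [ContinuousLinearMap.smul_apply, ContinuousLinearMap.sum_apply]
    rfl
  -- unit norm of σ i a ψ
  have huu : ∀ i a, (inner ℂ (σ i a ψ) (σ i a ψ) : ℂ) = 1 := by
    intro i a
    rw [hsym, hsq']
    rw [@inner_self_eq_norm_sq_to_K ℂ, hψ]
    norm_num
  -- trig sums
  have hc2 : (∑ a : Fin k, ((c a : ℝ):ℂ) * ((c a : ℝ):ℂ)) = ((k:ℂ) / 2) := by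
    have hr := sum_cos_sq' k (by omega)
    have h1 : (∑ a : Fin k, ((c a : ℝ):ℂ) * ((c a : ℝ):ℂ))
        = ((∑ a : Fin k, Real.cos ((a:ℝ) * π / k) ^ 2 : ℝ) : ℂ) := by
      rw [Complex.ofReal_sum]
      exact Finset.sum_congr rfl fun a _ => by rw [Complex.ofReal_pow, hc]; ring
    rw [h1, hr]
    push_cast
    ring
  have hs2 : (∑ a : Fin k, ((s a : ℝ):ℂ) * ((s a : ℝ):ℂ)) = ((k:ℂ) / 2) := by
    have hr := sum_sin_sq' k (by omega)
    have h1 : (∑ a : Fin k, ((s a : ℝ):ℂ) * ((s a : ℝ):ℂ))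
        = ((∑ a : Fin k, Real.sin ((a:ℝ) * π / k) ^ 2 : ℝ) : ℂ) := by
      rw [Complex.ofReal_sum]
      exact Finset.sum_congr rfl fun a _ => by rw [Complex.ofReal_pow, hs]; ring
    rw [h1, hr]
    push_cast
    ring
  have hcs : (∑ a : Fin k, ((c a : ℝ):ℂ) * ((s a : ℝ):ℂ)) = 0 := by
    have hr := sum_sin_mul_cos' k (by omega)
    have h1 : (∑ a : Fin k, ((c a : ℝ):ℂ) * ((s a : ℝ):ℂ))
        = ((∑ a : Fin k, Real.sin ((a:ℝ) * π / k) * Real.cos ((a:ℝ) * π / k) : ℝ) : ℂ) := by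
      rw [Complex.ofReal_sum]
      exact Finset.sum_congr rfl fun a _ => by rw [Complex.ofReal_mul, hs, hc]; ring
    rw [h1, hr]
    norm_num
  -- expansion of the Bell expectation
  have hcoef : ∀ a b : Fin k, Real.cos (π * ((a:ℝ) - (b:ℝ)) / k) = c a * c b + s a * s b := by
    intro a b
    rw [show π * ((a:ℝ) - (b:ℝ)) / k = (a:ℝ) * π / k - (b:ℝ) * π / k by ring, Real.cos_sub, hc, hs]
  have swap4 : ∀ (F : Fin k → Fin k → Fin N → Fin N → ℂ),
      ∑ a : Fin k, ∑ b : Fin k, ∑ i : Fin N, ∑ j : Fin N, F a b i j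
        = ∑ i : Fin N, ∑ j : Fin N, ∑ a : Fin k, ∑ b : Fin k, F a b i j := by
    intro F
    calc ∑ a : Fin k, ∑ b : Fin k, ∑ i : Fin N, ∑ j : Fin N, F a b i j
        = ∑ a : Fin k, ∑ i : Fin N, ∑ b : Fin k, ∑ j : Fin N, F a b i j :=
          Finset.sum_congr rfl fun a _ => Finset.sum_comm
      _ = ∑ a : Fin k, ∑ i : Fin N, ∑ j : Fin N, ∑ b : Fin k, F a b i j :=
          Finset.sum_congr rfl fun a _ => Finset.sum_congr rfl fun i _ => Finset.sum_comm
      _ = ∑ i : Fin N, ∑ a : Fin k, ∑ j : Fin N, ∑ b : Fin k, F a b i j := Finset.sum_comm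
      _ = ∑ i : Fin N, ∑ j : Fin N, ∑ a : Fin k, ∑ b : Fin k, F a b i j :=
          Finset.sum_congr rfl fun i _ => Finset.sum_comm
  have hVVexp : ∀ i j, (inner ℂ (V i) (V j) : ℂ)
      = ∑ a : Fin k, ∑ b : Fin k, (((c a:ℝ):ℂ) * ((c b:ℝ):ℂ)) * inner ℂ (σ i a ψ) (σ j b ψ) := by
    intro i j
    simp only [hV, sum_inner, inner_smul_left, Complex.conj_ofReal, inner_sum,
      inner_smul_right, Finset.mul_sum]
    rw [Finset.sum_comm]
    exact Finset.sum_congr rfl fun a _ => Finset.sum_congr rfl fun b _ => by ring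
  have hWWexp : ∀ i j, (inner ℂ (W i) (W j) : ℂ)
      = ∑ a : Fin k, ∑ b : Fin k, (((s a:ℝ):ℂ) * ((s b:ℝ):ℂ)) * inner ℂ (σ i a ψ) (σ j b ψ) := by
    intro i j
    simp only [hW, sum_inner, inner_smul_left, Complex.conj_ofReal, inner_sum,
      inner_smul_right, Finset.mul_sum]
    rw [Finset.sum_comm]
    exact Finset.sum_congr rfl fun a _ => Finset.sum_congr rfl fun b _ => by ring
  have hB : (inner ℂ ψ (Bop ψ) : ℂ) = μ * ∑ i : Fin N, ∑ j : Fin N,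
      (if i ≠ j then ((inner ℂ (V i) (V j) : ℂ) + (inner ℂ (W i) (W j) : ℂ)) else 0) := by
    have e1 : (inner ℂ ψ (Bop ψ) : ℂ) = ∑ a : Fin k, ∑ b : Fin k,
        (((2 / (k : ℝ)) * Real.cos (π * ((a : ℝ) - (b : ℝ)) / k) : ℝ) : ℂ) *
        ∑ i : Fin N, ∑ j : Fin N,
          (if i ≠ j then (inner ℂ (σ i a ψ) (σ j b ψ) : ℂ) else 0) := by
      rw [hBop]
      simp only [ContinuousLinearMap.sum_apply, ContinuousLinearMap.smul_apply, inner_sum,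
        inner_smul_right]
      refine Finset.sum_congr rfl fun a _ => Finset.sum_congr rfl fun b _ => ?_
      congr 1
      refine Finset.sum_congr rfl fun i' _ => Finset.sum_congr rfl fun j _ => ?_
      by_cases hij : i' ≠ j
      · simp only [if_pos hij, ContinuousLinearMap.mul_apply]
        exact (hsym i' a ψ (σ j b ψ)).symm
      · simp [hij]
    have e2 : ∀ a b : Fin k, (((2 / (k : ℝ)) * Real.cos (π * ((a : ℝ) - (b : ℝ)) / k) : ℝ) : ℂ) *
        ∑ i : Fin N, ∑ j : Fin N,
          (if i ≠ j then (inner ℂ (σ i a ψ) (σ j b ψ) : ℂ) else 0)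
        = ∑ i : Fin N, ∑ j : Fin N, (if i ≠ j then
            (((2 / (k : ℝ)) * (c a * c b + s a * s b) : ℝ) : ℂ) * inner ℂ (σ i a ψ) (σ j b ψ)
          else 0) := by
      intro a b
      rw [Finset.mul_sum]
      refine Finset.sum_congr rfl fun i' _ => ?_
      rw [Finset.mul_sum]
      refine Finset.sum_congr rfl fun j _ => ?_
      by_cases hij : i' ≠ j
      · rw [if_pos hij, if_pos hij, hcoef a b]
      · simp [hij]
    rw [e1, Finset.sum_congr rfl fun a _ => Finset.sum_congr rfl fun b _ => e2 a b, swap4]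
    rw [Finset.mul_sum]
    refine Finset.sum_congr rfl fun i' _ => ?_
    rw [Finset.mul_sum]
    refine Finset.sum_congr rfl fun j _ => ?_
    by_cases hij : i' ≠ j
    · simp only [if_pos hij]
      rw [hVVexp i' j, hWWexp i' j]
      rw [mul_add, Finset.mul_sum, Finset.mul_sum, ← Finset.sum_add_distrib]
      refine Finset.sum_congr rfl fun a _ => ?_
      rw [Finset.mul_sum, Finset.mul_sum, ← Finset.sum_add_distrib]
      refine Finset.sum_congr rfl fun b _ => ?_
      rw [hμ]
      push_cast
      ring
    · simp [hij]
  -- defect vectors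
  set D : Fin N → Fin k → H := fun i a =>
    σ i a ψ - μ • (((c a : ℝ):ℂ) • V i + ((s a : ℝ):ℂ) • W i) with hD
  have hDsum : ∀ i, (∑ a : Fin k, (inner ℂ (D i a) (D i a) : ℂ))
      = (k:ℂ) - μ * ((inner ℂ (V i) (V i) : ℂ) + (inner ℂ (W i) (W i) : ℂ)) := by
    intro i
    have hpV : ∑ a : Fin k, ((c a:ℝ):ℂ) * (inner ℂ (σ i a ψ) (V i) : ℂ) = inner ℂ (V i) (V i) := by
      have : ∀ a : Fin k, ((c a:ℝ):ℂ) * (inner ℂ (σ i a ψ) (V i) : ℂ)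
          = (inner ℂ (((c a:ℝ):ℂ) • σ i a ψ) (V i) : ℂ) := by
        intro a; rw [inner_smul_left, Complex.conj_ofReal]
      rw [Finset.sum_congr rfl fun a _ => this a, ← sum_inner]
    have hqW : ∑ a : Fin k, ((s a:ℝ):ℂ) * (inner ℂ (σ i a ψ) (W i) : ℂ) = inner ℂ (W i) (W i) := by
      have : ∀ a : Fin k, ((s a:ℝ):ℂ) * (inner ℂ (σ i a ψ) (W i) : ℂ)
          = (inner ℂ (((s a:ℝ):ℂ) • σ i a ψ) (W i) : ℂ) := by
        intro a; rw [inner_smul_left, Complex.conj_ofReal]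
      rw [Finset.sum_congr rfl fun a _ => this a, ← sum_inner]
    have hpV' : ∑ a : Fin k, ((c a:ℝ):ℂ) * (inner ℂ (V i) (σ i a ψ) : ℂ) = inner ℂ (V i) (V i) := by
      have : ∀ a : Fin k, ((c a:ℝ):ℂ) * (inner ℂ (V i) (σ i a ψ) : ℂ)
          = (inner ℂ (V i) (((c a:ℝ):ℂ) • σ i a ψ) : ℂ) := by
        intro a; rw [inner_smul_right]
      rw [Finset.sum_congr rfl fun a _ => this a, ← inner_sum]
    have hqW' : ∑ a : Fin k, ((s a:ℝ):ℂ) * (inner ℂ (W i) (σ i a ψ) : ℂ) = inner ℂ (W i) (W i) := by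
      have : ∀ a : Fin k, ((s a:ℝ):ℂ) * (inner ℂ (W i) (σ i a ψ) : ℂ)
          = (inner ℂ (W i) (((s a:ℝ):ℂ) • σ i a ψ) : ℂ) := by
        intro a; rw [inner_smul_right]
      rw [Finset.sum_congr rfl fun a _ => this a, ← inner_sum]
    have hexp : ∀ a : Fin k, (inner ℂ (D i a) (D i a) : ℂ) =
        1 - μ * (((c a:ℝ):ℂ) * inner ℂ (σ i a ψ) (V i)) - μ * (((s a:ℝ):ℂ) * inner ℂ (σ i a ψ) (W i))
          - μ * (((c a:ℝ):ℂ) * inner ℂ (V i) (σ i a ψ)) - μ * (((s a:ℝ):ℂ) * inner ℂ (W i) (σ i a ψ))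
          + μ * μ * ((((c a:ℝ):ℂ) * ((c a:ℝ):ℂ)) * inner ℂ (V i) (V i))
          + μ * μ * ((((c a:ℝ):ℂ) * ((s a:ℝ):ℂ)) * inner ℂ (V i) (W i))
          + μ * μ * ((((c a:ℝ):ℂ) * ((s a:ℝ):ℂ)) * inner ℂ (W i) (V i))
          + μ * μ * ((((s a:ℝ):ℂ) * ((s a:ℝ):ℂ)) * inner ℂ (W i) (W i)) := by
      intro a
      simp only [hD, inner_sub_left, inner_sub_right, inner_add_left, inner_add_right,
        inner_smul_left, inner_smul_right, Complex.conj_ofReal, huu i a, hμ]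
      ring
    rw [Finset.sum_congr rfl fun a _ => hexp a]
    simp only [Finset.sum_add_distrib, Finset.sum_sub_distrib, ← Finset.mul_sum,
      ← Finset.sum_mul]
    rw [hpV, hqW, hpV', hqW', hc2, hs2, hcs]
    simp only [Finset.sum_const, Finset.card_univ, Fintype.card_fin, nsmul_eq_mul, mul_one]
    have hμ2 : μ * μ * ((k:ℂ)/2) = μ := by
      rw [hμ]
      push_cast
      field_simp
    linear_combination (inner ℂ (V i) (V i) + inner ℂ (W i) (W i) : ℂ) * hμ2
  -- master identity and vanishing
  have hIVVid : ∀ (F : Fin N → Fin N → ℂ),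
      ∑ i : Fin N, ∑ j : Fin N, (if i ≠ j then F i j else 0)
        = (∑ i : Fin N, ∑ j : Fin N, F i j) - ∑ i : Fin N, F i i := by
    intro F
    have h1 : ∀ i, ∑ j : Fin N, (if i ≠ j then F i j else 0) = (∑ j : Fin N, F i j) - F i i := by
      intro i
      have h2 : ∀ j, (if i ≠ j then F i j else 0) = F i j - (if i = j then F i j else 0) := by
        intro j; by_cases h : i = j <;> simp [h]
      rw [Finset.sum_congr rfl fun j _ => h2 j, Finset.sum_sub_distrib, Finset.sum_ite_eq]
      simp
    rw [Finset.sum_congr rfl fun i _ => h1 i, Finset.sum_sub_distrib]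
  have hVsum : (inner ℂ (∑ i, V i) (∑ i, V i) : ℂ) = ∑ i : Fin N, ∑ j : Fin N, inner ℂ (V i) (V j) := by
    rw [sum_inner]
    exact Finset.sum_congr rfl fun i _ => inner_sum _ _ _
  have hWsum : (inner ℂ (∑ i, W i) (∑ i, W i) : ℂ) = ∑ i : Fin N, ∑ j : Fin N, inner ℂ (W i) (W j) := by
    rw [sum_inner]
    exact Finset.sum_congr rfl fun i _ => inner_sum _ _ _
  have hmaster : μ * ((inner ℂ (∑ i, V i) (∑ i, V i) : ℂ) + (inner ℂ (∑ i, W i) (∑ i, W i) : ℂ))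
      + ∑ i : Fin N, ∑ a : Fin k, (inner ℂ (D i a) (D i a) : ℂ) = 0 := by
    have key := hmax
    rw [hB] at key
    have e3 : ∑ i : Fin N, ∑ j : Fin N,
        (if i ≠ j then ((inner ℂ (V i) (V j) : ℂ) + (inner ℂ (W i) (W j) : ℂ)) else 0)
        = ((inner ℂ (∑ i, V i) (∑ i, V i) : ℂ) + (inner ℂ (∑ i, W i) (∑ i, W i) : ℂ))
          - ∑ i : Fin N, ((inner ℂ (V i) (V i) : ℂ) + (inner ℂ (W i) (W i) : ℂ)) := by
      rw [hIVVid fun i j => ((inner ℂ (V i) (V j) : ℂ) + (inner ℂ (W i) (W j) : ℂ))]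
      congr 1
      calc ∑ i : Fin N, ∑ j : Fin N, ((inner ℂ (V i) (V j) : ℂ) + (inner ℂ (W i) (W j) : ℂ))
          = ∑ i : Fin N, ((∑ j : Fin N, (inner ℂ (V i) (V j) : ℂ))
              + ∑ j : Fin N, (inner ℂ (W i) (W j) : ℂ)) :=
            Finset.sum_congr rfl fun i _ => Finset.sum_add_distrib
        _ = (∑ i : Fin N, ∑ j : Fin N, (inner ℂ (V i) (V j) : ℂ))
              + ∑ i : Fin N, ∑ j : Fin N, (inner ℂ (W i) (W j) : ℂ) := Finset.sum_add_distrib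
        _ = _ := by rw [hVsum, hWsum]
    rw [e3] at key
    have e4 : ∑ i : Fin N, ∑ a : Fin k, (inner ℂ (D i a) (D i a) : ℂ)
        = (N:ℂ) * (k:ℂ) - μ * ∑ i : Fin N, ((inner ℂ (V i) (V i) : ℂ) + (inner ℂ (W i) (W i) : ℂ)) := by
      rw [Finset.sum_congr rfl fun i _ => hDsum i, Finset.sum_sub_distrib, ← Finset.mul_sum]
      rw [Finset.sum_const, Finset.card_univ, Fintype.card_fin, nsmul_eq_mul]
    rw [e4]
    push_cast at key ⊢
    linear_combination key
  have hreal : (2/(k:ℝ)) * (‖∑ i, V i‖^2 + ‖∑ i, W i‖^2)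
      + ∑ i : Fin N, ∑ a : Fin k, ‖D i a‖^2 = 0 := by
    have h := hmaster
    simp only [@inner_self_eq_norm_sq_to_K ℂ, Complex.coe_algebraMap] at h
    rw [hμ] at h
    have h' : (((2/(k:ℝ)) * (‖∑ i, V i‖^2 + ‖∑ i, W i‖^2)
        + ∑ i : Fin N, ∑ a : Fin k, ‖D i a‖^2 : ℝ) : ℂ) = ((0:ℝ):ℂ) := by
      push_cast at h ⊢
      linear_combination h
    exact_mod_cast h'
  have t1 : (0:ℝ) < 2/(k:ℝ) := by positivity
  have t2 : (0:ℝ) ≤ ‖∑ i, V i‖^2 := by positivity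
  have t3 : (0:ℝ) ≤ ‖∑ i, W i‖^2 := by positivity
  have t4 : (0:ℝ) ≤ ∑ i : Fin N, ∑ a : Fin k, ‖D i a‖^2 := by positivity
  have t5 : (0:ℝ) ≤ (2/(k:ℝ)) * (‖∑ i, V i‖^2 + ‖∑ i, W i‖^2) := by positivity
  have hDz2 : ∑ i : Fin N, ∑ a : Fin k, ‖D i a‖^2 = 0 := by linarith
  have hVWz : ‖∑ i, V i‖^2 + ‖∑ i, W i‖^2 = 0 := by
    have h6 : (2/(k:ℝ)) * (‖∑ i, V i‖^2 + ‖∑ i, W i‖^2) = 0 := by linarith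
    rcases mul_eq_zero.mp h6 with h | h
    · exact absurd h t1.ne'
    · exact h
  have hDzero : ∀ i a, D i a = 0 := by
    intro i a
    have h7 := (Finset.sum_eq_zero_iff_of_nonneg (fun i _ => by positivity)).mp hDz2 i (Finset.mem_univ i)
    have h8 := (Finset.sum_eq_zero_iff_of_nonneg (fun a _ => by positivity)).mp h7 a (Finset.mem_univ a)
    have h9 : ‖D i a‖ = 0 := by
      have := sq_eq_zero_iff.mp h8
      exact this
    exact norm_eq_zero.mp h9
  have hVzero : (∑ i, V i) = 0 := by
    have : ‖∑ i, V i‖^2 = 0 := by linarith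
    exact norm_eq_zero.mp (sq_eq_zero_iff.mp this)
  have hWzero : (∑ i, W i) = 0 := by
    have : ‖∑ i, W i‖^2 = 0 := by linarith
    exact norm_eq_zero.mp (sq_eq_zero_iff.mp this)
  -- the pointwise relations
  have hrel : ∀ i a, σ i a ψ = ((c a : ℝ):ℂ) • Z i ψ + ((s a : ℝ):ℂ) • X i ψ := by
    intro i a
    have h0 := hDzero i a
    rw [hD] at h0
    simp only [sub_eq_zero] at h0
    rw [h0, smul_add, hZψ, hXψ, smul_comm μ, smul_comm μ]
  have hTz : (∑ i, Z i ψ) = 0 := by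
    calc (∑ i, Z i ψ) = μ • ∑ i, V i := by
          rw [Finset.smul_sum]; exact Finset.sum_congr rfl fun i _ => hZψ i
      _ = 0 := by rw [hVzero, smul_zero]
  have hSz : (∑ i, X i ψ) = 0 := by
    calc (∑ i, X i ψ) = μ • ∑ i, W i := by
          rw [Finset.smul_sum]; exact Finset.sum_congr rfl fun i _ => hXψ i
      _ = 0 := by rw [hWzero, smul_zero]
  clear hB hDsum hmaster hDzero hVzero hWzero hmax hBop huu
  intro i
  -- commutation of party-i operators with party-j operators
  have hcZ : ∀ j, j ≠ i → ∀ a, Commute (σ i a) (Z j) := by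
    intro j hj a
    rw [hZ j]
    refine Commute.smul_right ?_ _
    refine Commute.sum_right _ _ _ fun b _ => ?_
    refine Commute.smul_right ?_ _
    exact hcomm i j a b (Ne.symm hj)
  have hcX : ∀ j, j ≠ i → ∀ a, Commute (σ i a) (X j) := by
    intro j hj a
    rw [hX j]
    refine Commute.smul_right ?_ _
    refine Commute.sum_right _ _ _ fun b _ => ?_
    refine Commute.smul_right ?_ _
    exact hcomm i j a b (Ne.symm hj)
  have hcZZ : ∀ j, j ≠ i → Commute (Z i) (Z j) := by
    intro j hj
    rw [hZ i]
    refine Commute.smul_left ?_ _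
    refine Commute.sum_left _ _ _ fun b _ => ?_
    refine Commute.smul_left ?_ _
    exact hcZ j hj b
  have hcXZ : ∀ j, j ≠ i → Commute (X i) (Z j) := by
    intro j hj
    rw [hX i]
    refine Commute.smul_left ?_ _
    refine Commute.sum_left _ _ _ fun b _ => ?_
    refine Commute.smul_left ?_ _
    exact hcZ j hj b
  have hcZX : ∀ j, j ≠ i → Commute (Z i) (X j) := by
    intro j hj
    rw [hZ i]
    refine Commute.smul_left ?_ _
    refine Commute.sum_left _ _ _ fun b _ => ?_
    refine Commute.smul_left ?_ _
    exact hcX j hj b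
  have hcXX : ∀ j, j ≠ i → Commute (X i) (X j) := by
    intro j hj
    rw [hX i]
    refine Commute.smul_left ?_ _
    refine Commute.sum_left _ _ _ fun b _ => ?_
    refine Commute.smul_left ?_ _
    exact hcX j hj b
  -- pointwise commutation helpers
  have capp : ∀ (A B : H →L[ℂ] H), Commute A B → ∀ x : H, A (B x) = B (A x) := by
    intro A B hAB x
    have := congrArg (fun T : H →L[ℂ] H => T x) hAB.eq
    simpa [ContinuousLinearMap.mul_apply] using this
  -- the relation transfers to Z i ψ and X i ψ
  have hsumZ' : Z i ψ = - ∑ j ∈ Finset.univ.erase i, Z j ψ := by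
    have h := hTz
    rw [← Finset.add_sum_erase _ (fun j => Z j ψ) (Finset.mem_univ i)] at h
    exact eq_neg_of_add_eq_zero_left h
  have hsumX' : X i ψ = - ∑ j ∈ Finset.univ.erase i, X j ψ := by
    have h := hSz
    rw [← Finset.add_sum_erase _ (fun j => X j ψ) (Finset.mem_univ i)] at h
    exact eq_neg_of_add_eq_zero_left h
  have htransZ : ∀ j, j ≠ i → ∀ a, σ i a (Z j ψ)
      = ((c a : ℝ):ℂ) • Z i (Z j ψ) + ((s a : ℝ):ℂ) • X i (Z j ψ) := by
    intro j hj a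
    have h1 : σ i a (Z j ψ) = Z j (σ i a ψ) := capp _ _ (hcZ j hj a) ψ
    rw [h1, hrel i a, map_add, map_smul, map_smul,
      capp _ _ (hcZZ j hj).symm ψ, capp _ _ (hcXZ j hj).symm ψ]
  have htransX : ∀ j, j ≠ i → ∀ a, σ i a (X j ψ)
      = ((c a : ℝ):ℂ) • Z i (X j ψ) + ((s a : ℝ):ℂ) • X i (X j ψ) := by
    intro j hj a
    have h1 : σ i a (X j ψ) = X j (σ i a ψ) := capp _ _ (hcX j hj a) ψ
    rw [h1, hrel i a, map_add, map_smul, map_smul,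
      capp _ _ (hcZX j hj).symm ψ, capp _ _ (hcXX j hj).symm ψ]
  have hrelv : ∀ a, σ i a (Z i ψ) = ((c a : ℝ):ℂ) • Z i (Z i ψ) + ((s a : ℝ):ℂ) • X i (Z i ψ) := by
    intro a
    calc σ i a (Z i ψ)
        = σ i a (-∑ j ∈ Finset.univ.erase i, Z j ψ) := by rw [← hsumZ']
      _ = -∑ j ∈ Finset.univ.erase i, σ i a (Z j ψ) := by rw [map_neg, map_sum]
      _ = -∑ j ∈ Finset.univ.erase i,
            (((c a : ℝ):ℂ) • Z i (Z j ψ) + ((s a : ℝ):ℂ) • X i (Z j ψ)) := by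
          congr 1
          exact Finset.sum_congr rfl fun j hj => htransZ j (Finset.ne_of_mem_erase hj) a
      _ = ((c a : ℝ):ℂ) • Z i (-∑ j ∈ Finset.univ.erase i, Z j ψ)
            + ((s a : ℝ):ℂ) • X i (-∑ j ∈ Finset.univ.erase i, Z j ψ) := by
          rw [map_neg, map_sum, map_neg, map_sum, smul_neg, smul_neg, Finset.smul_sum,
            Finset.smul_sum, ← neg_add, ← Finset.sum_add_distrib]
      _ = ((c a : ℝ):ℂ) • Z i (Z i ψ) + ((s a : ℝ):ℂ) • X i (Z i ψ) := by rw [← hsumZ']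
  have hrelw : ∀ a, σ i a (X i ψ) = ((c a : ℝ):ℂ) • Z i (X i ψ) + ((s a : ℝ):ℂ) • X i (X i ψ) := by
    intro a
    calc σ i a (X i ψ)
        = σ i a (-∑ j ∈ Finset.univ.erase i, X j ψ) := by rw [← hsumX']
      _ = -∑ j ∈ Finset.univ.erase i, σ i a (X j ψ) := by rw [map_neg, map_sum]
      _ = -∑ j ∈ Finset.univ.erase i,
            (((c a : ℝ):ℂ) • Z i (X j ψ) + ((s a : ℝ):ℂ) • X i (X j ψ)) := by
          congr 1
          exact Finset.sum_congr rfl fun j hj => htransX j (Finset.ne_of_mem_erase hj) a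
      _ = ((c a : ℝ):ℂ) • Z i (-∑ j ∈ Finset.univ.erase i, X j ψ)
            + ((s a : ℝ):ℂ) • X i (-∑ j ∈ Finset.univ.erase i, X j ψ) := by
          rw [map_neg, map_sum, map_neg, map_sum, smul_neg, smul_neg, Finset.smul_sum,
            Finset.smul_sum, ← neg_add, ← Finset.sum_add_distrib]
      _ = ((c a : ℝ):ℂ) • Z i (X i ψ) + ((s a : ℝ):ℂ) • X i (X i ψ) := by rw [← hsumX']
  -- special angles
  have h0lt : 0 < k := by omega
  set a0 : Fin k := ⟨0, h0lt⟩ with ha0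
  set a1 : Fin k := ⟨1, by omega⟩ with ha1
  set a2 : Fin k := ⟨2, by omega⟩ with ha2
  have hca0 : c a0 = 1 := by simp [hc, ha0]
  have hsa0 : s a0 = 0 := by simp [hs, ha0]
  have hca1 : c a1 = Real.cos (π / k) := by simp [hc, ha1]
  have hsa1 : s a1 = Real.sin (π / k) := by simp [hs, ha1]
  have hca2 : c a2 = Real.cos (2 * π / k) := by
    rw [hc]
    norm_num [ha2]
  have hsa2 : s a2 = Real.sin (2 * π / k) := by
    rw [hs]
    norm_num [ha2]
  -- trig facts
  have hkR3 : (3:ℝ) ≤ k := by exact_mod_cast hk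
  have hsin1 : Real.sin (π / k) ≠ 0 := by
    have h1 : 0 < π / k := by positivity
    have h2 : π / k < π := by
      rw [div_lt_iff₀ hkR]
      nlinarith [Real.pi_pos, mul_lt_mul_of_pos_left (show (1:ℝ) < k by linarith) Real.pi_pos]
    exact (Real.sin_pos_of_pos_of_lt_pi h1 h2).ne'
  have hsin2 : Real.sin (2 * π / k) ≠ 0 := by
    have h1 : 0 < 2 * π / k := by positivity
    have h2 : 2 * π / k < π := by
      rw [div_lt_iff₀ hkR]
      nlinarith [Real.pi_pos, mul_lt_mul_of_pos_left (show (2:ℝ) < k by linarith) Real.pi_pos]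
    exact (Real.sin_pos_of_pos_of_lt_pi h1 h2).ne'
  have hcos1 : Real.cos (π / k) ≠ 0 := by
    have ha : 0 ≤ π / k := by positivity
    have hb : π / k < π / 2 := by
      rw [div_lt_div_iff₀ hkR (by norm_num)]
      nlinarith [Real.pi_pos, mul_lt_mul_of_pos_left (show (2:ℝ) < k by linarith) Real.pi_pos]
    exact (Real.cos_pos_of_mem_Ioo ⟨by linarith [Real.pi_pos], hb⟩).ne'
  have hdet : c a1 * s a2 - c a2 * s a1 = Real.sin (π / k) := by
    have h := Real.sin_sub (2*π/k) (π/k)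
    rw [show 2*π/k - π/k = π/k by ring] at h
    rw [hca1, hsa2, hca2, hsa1]
    linear_combination -h
  -- basic consequences at angle 0
  have e2 : σ i a0 ψ = Z i ψ := by
    have h := hrel i a0
    rw [hca0, hsa0] at h
    simpa using h
  have e3 : σ i a0 (Z i ψ) = Z i (Z i ψ) := by
    have h := hrelv a0
    rw [hca0, hsa0] at h
    simpa using h
  have hZZ : Z i (Z i ψ) = ψ := by
    rw [← e3, ← e2]
    exact hsq' i a0 ψ
  -- the master pointwise identity for each a
  have main : ∀ a : Fin k, (((s a:ℝ):ℂ) * ((s a:ℝ):ℂ)) • (X i (X i ψ) - ψ)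
      = -(((c a:ℝ):ℂ) * ((s a:ℝ):ℂ)) • (Z i (X i ψ) + X i (Z i ψ)) := by
    intro a
    have hab : ((c a:ℝ):ℂ) * ((c a:ℝ):ℂ) + ((s a:ℝ):ℂ) * ((s a:ℝ):ℂ) = 1 := by
      have := Real.sin_sq_add_cos_sq ((a:ℝ) * π / k)
      have h2 : s a * s a + c a * c a = 1 := by rw [hs, hc]; nlinarith [this]
      push_cast
      exact_mod_cast by linarith [h2] 
    have star : ψ = ((c a:ℝ):ℂ) • (((c a:ℝ):ℂ) • ψ + ((s a:ℝ):ℂ) • X i (Z i ψ))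
        + ((s a:ℝ):ℂ) • (((c a:ℝ):ℂ) • Z i (X i ψ) + ((s a:ℝ):ℂ) • X i (X i ψ)) := by
      conv_lhs => rw [← hsq' i a ψ]
      rw [hrel i a, map_add, map_smul, map_smul, hrelv a, hrelw a, hZZ]
    linear_combination (norm := module) -star - hab • ψ
  -- cancel one factor of s a
  have E : ∀ a : Fin k, ((s a:ℝ):ℂ) ≠ 0 →
      ((s a:ℝ):ℂ) • (X i (X i ψ) - ψ)
        = -((c a:ℝ):ℂ) • (Z i (X i ψ) + X i (Z i ψ)) := by
    intro a hβ
    apply smul_right_injective H hβ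
    have h := main a
    calc ((s a:ℝ):ℂ) • ((s a:ℝ):ℂ) • (X i (X i ψ) - ψ)
        = (((s a:ℝ):ℂ) * ((s a:ℝ):ℂ)) • (X i (X i ψ) - ψ) := by rw [smul_smul]
      _ = -(((c a:ℝ):ℂ) * ((s a:ℝ):ℂ)) • (Z i (X i ψ) + X i (Z i ψ)) := h
      _ = ((s a:ℝ):ℂ) • -((c a:ℝ):ℂ) • (Z i (X i ψ) + X i (Z i ψ)) := by
          rw [smul_smul]
          congr 1
          ring
  have hβ1 : ((s a1:ℝ):ℂ) ≠ 0 := by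
    rw [hsa1]
    exact Complex.ofReal_ne_zero.mpr hsin1
  have hβ2 : ((s a2:ℝ):ℂ) ≠ 0 := by
    rw [hsa2]
    exact Complex.ofReal_ne_zero.mpr hsin2
  have E1 := E a1 hβ1
  have E2 := E a2 hβ2
  have comb : ((((c a2:ℝ):ℂ) * ((s a1:ℝ):ℂ)) - (((c a1:ℝ):ℂ) * ((s a2:ℝ):ℂ)))
      • (X i (X i ψ) - ψ) = 0 := by
    linear_combination (norm := module) ((c a2:ℝ):ℂ) • E1 - ((c a1:ℝ):ℂ) • E2
  have hcoef0 : ((((c a2:ℝ):ℂ) * ((s a1:ℝ):ℂ)) - (((c a1:ℝ):ℂ) * ((s a2:ℝ):ℂ))) ≠ 0 := by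
    have hdc : ((((c a2:ℝ):ℂ) * ((s a1:ℝ):ℂ)) - (((c a1:ℝ):ℂ) * ((s a2:ℝ):ℂ)))
        = ((-(Real.sin (π / k)) : ℝ) : ℂ) := by
      rw [show (-(Real.sin (π / k)) : ℝ) = -(c a1 * s a2 - c a2 * s a1) by rw [hdet]]
      push_cast
      ring
    rw [hdc]
    exact Complex.ofReal_ne_zero.mpr (by simpa using hsin1)
  have hXX : X i (X i ψ) = ψ := by
    have h := (smul_eq_zero.mp comb).resolve_left hcoef0
    exact sub_eq_zero.mp h
  have hα1 : ((c a1:ℝ):ℂ) ≠ 0 := by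
    rw [hca1]
    exact Complex.ofReal_ne_zero.mpr hcos1
  have hA : Z i (X i ψ) + X i (Z i ψ) = 0 := by
    have h := E1
    rw [hXX, sub_self, smul_zero] at h
    have h2 : ((c a1:ℝ):ℂ) • (Z i (X i ψ) + X i (Z i ψ)) = 0 := by
      have := h.symm
      rwa [neg_smul, neg_eq_zero] at this
    exact (smul_eq_zero.mp h2).resolve_left hα1
  refine ⟨?_, ?_, ?_⟩
  · rw [ContinuousLinearMap.mul_apply]
    exact hZZ
  · rw [ContinuousLinearMap.mul_apply]
    exact hXX
  · rw [ContinuousLinearMap.add_apply, ContinuousLinearMap.mul_apply,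
      ContinuousLinearMap.mul_apply]
    exact hA
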